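/- For the polynomial hypergroup generated by (P_n), suppose φ : ℕ → ℂ and σ : ℕ → ℂ satisfy the sine equation σ(δ_m*δ_n) = σ(m)φ(n) + φ(m)σ(n) with φ an exponential, φ(0)=1. Then σ(0) = 0 and σ(n) = σ(1)·P_n'(φ(1)) for all n. -/
import Mathlib

open Polynomial

theorem sine_function_form
    (a b c : ℕ → ℝ) (P : ℕ → Polynomial ℝ) (lc : ℕ → ℕ → ℕ → ℝ)
    (ha0 : a 0 = 0) (hb0 : b 0 = 0)
    (hc : ∀ n, 0 < c n) (hb : ∀ n, 0 ≤ b n) (ha : ∀ n, 0 < a (n + 1))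
    (hsum : ∀ n, a n + b n + c n = 1)
    (hP0 : P 0 = 1) (hP1 : P 1 = X)
    (hrec : ∀ n, 1 ≤ n →
      X * P n = C (a n) * P (n - 1) + C (b n) * P n + C (c n) * P (n + 1))
    (hlin : ∀ m n, P m * P n =
      ∑ k ∈ Finset.Icc (Nat.dist m n) (m + n), C (lc m n k) * P k)
    (hnonneg : ∀ m n k, 0 ≤ lc m n k)
    (φ σ : ℕ → ℂ)
    (hφ0 : φ 0 = 1)
    (hφ : ∀ m n : ℕ,
      ∑ k ∈ Finset.Icc (Nat.dist m n) (m + n), (lc m n k : ℂ) * φ k = φ m * φ n)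
    (hσ : ∀ m n : ℕ,
      ∑ k ∈ Finset.Icc (Nat.dist m n) (m + n), (lc m n k : ℂ) * σ k =
        σ m * φ n + φ m * σ n) :
    σ 0 = 0 ∧ ∀ n, σ n = σ 1 * Polynomial.aeval (φ 1) (derivative (P n)) := by
  -- coefficient facts: P n has "degree n" with positive top coefficient
  have hcoeff : ∀ n : ℕ, 0 < (P n).coeff n ∧ ∀ k, n < k → (P n).coeff k = 0 := by
    intro n
    induction n using Nat.strong_induction_on with
    | _ n ih =>
      match n with
      | 0 =>
        refine ⟨by simp [hP0], fun k hk => ?_⟩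
        simp [hP0, Polynomial.coeff_one]
        omega
      | 1 =>
        refine ⟨by simp [hP1], fun k hk => ?_⟩
        simp [hP1, Polynomial.coeff_X]
        omega
      | (m+2) =>
        have h1 := ih (m+1) (by omega)
        have h0 := ih m (by omega)
        have key : ∀ k, c (m+1) * (P (m+2)).coeff k
            = (X * P (m+1)).coeff k - a (m+1) * (P m).coeff k
              - b (m+1) * (P (m+1)).coeff k := by
          intro k
          have h := congrArg (fun p => Polynomial.coeff p k) (hrec (m+1) (by omega))
          simp only [Polynomial.coeff_add, Polynomial.coeff_C_mul, Nat.add_sub_cancel] at h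
          linarith [h]
        constructor
        · have hk := key (m+2)
          rw [Polynomial.coeff_X_mul] at hk
          rw [h0.2 (m+2) (by omega), h1.2 (m+2) (by omega)] at hk
          have : c (m+1) * (P (m+2)).coeff (m+2) = (P (m+1)).coeff (m+1) := by linarith
          nlinarith [h1.1, hc (m+1)]
        · intro k hk
          obtain ⟨j, rfl⟩ : ∃ j, k = j + 1 := ⟨k - 1, by omega⟩
          have hkk := key (j+1)
          rw [Polynomial.coeff_X_mul] at hkk
          rw [h0.2 (j+1) (by omega), h1.2 (j+1) (by omega), h1.2 j (by omega)] at hkk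
          have hcne := (hc (m+1)).ne'
          have : c (m+1) * (P (m+2)).coeff (j+1) = 0 := by linarith
          exact (mul_eq_zero.mp this).resolve_left hcne
  -- key linearization coefficient is positive
  have hlc : ∀ n : ℕ, lc 1 n (n+1) * (P (n+1)).coeff (n+1) = (P n).coeff n := by
    intro n
    have h := congrArg (fun p => Polynomial.coeff p (n+1)) (hlin 1 n)
    simp only [Polynomial.finset_sum_coeff, Polynomial.coeff_C_mul, hP1] at h
    rw [Polynomial.coeff_X_mul] at h
    rw [Finset.sum_eq_single (n+1)] at h
    · exact h.symm
    · intro k hk hne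
      have hk' : k ≤ 1 + n := (Finset.mem_Icc.mp hk).2
      rw [(hcoeff k).2 (n+1) (by omega), mul_zero]
    · intro hmem
      exact absurd (Finset.mem_Icc.mpr ⟨by simp [Nat.dist] <;> omega, by omega⟩) hmem
  have hlcpos : ∀ n : ℕ, 0 < lc 1 n (n+1) := by
    intro n
    have h := hlc n
    nlinarith [(hcoeff n).1, (hcoeff (n+1)).1]
  set lam : ℂ := φ 1 with hlam
  -- φ n = P n (lam)
  have hphi : ∀ n : ℕ, φ n = Polynomial.aeval lam (P n) := by
    intro n
    induction n using Nat.strong_induction_on with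
    | _ n ih =>
      match n with
      | 0 => simp [hP0, hφ0]
      | 1 => simp [hP1, hlam]
      | (m+2) =>
        have heval := congrArg (Polynomial.aeval lam) (hlin 1 (m+1))
        simp only [map_mul, map_sum, Polynomial.aeval_C, hP1, Polynomial.aeval_X,
          Complex.coe_algebraMap] at heval
        have hphieq := hφ 1 (m+1)
        have hsub : ∑ k ∈ Finset.Icc (Nat.dist 1 (m+1)) (1 + (m+1)),
            (lc 1 (m+1) k : ℂ) * (φ k - Polynomial.aeval lam (P k)) = 0 := by
          simp only [mul_sub, Finset.sum_sub_distrib]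
          rw [hphieq, ← heval, ih (m+1) (by omega)]
          ring
        rw [Finset.sum_eq_single (m+2)] at hsub
        · have hne : (lc 1 (m+1) (m+2) : ℂ) ≠ 0 := by
            exact_mod_cast (hlcpos (m+1)).ne'
          have := (mul_eq_zero.mp hsub).resolve_left hne
          linear_combination this
        · intro k hk hne
          have hk' : k ≤ 1 + (m+1) := (Finset.mem_Icc.mp hk).2
          rw [ih k (by omega), sub_self, mul_zero]
        · intro hmem
          exact absurd (Finset.mem_Icc.mpr ⟨by simp [Nat.dist] <;> omega, by omega⟩) hmem
  -- σ 0 = 0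
  have hlc000 : lc 0 0 0 = 1 := by
    have h := congrArg (fun p => Polynomial.coeff p 0) (hlin 0 0)
    simp [hP0, Nat.dist_self] at h
    linarith
  have hσ0 : σ 0 = 0 := by
    have h := hσ 0 0
    simp [Nat.dist_self, hlc000, hφ0] at h
    linear_combination h
  refine ⟨hσ0, ?_⟩
  -- σ n = σ 1 * P n' (lam)
  intro n
  induction n using Nat.strong_induction_on with
  | _ n ih =>
    match n with
    | 0 => simp [hP0, hσ0]
    | 1 => simp [hP1]
    | (m+2) =>
      have hder := congrArg (fun p => Polynomial.aeval lam (derivative p)) (hlin 1 (m+1))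
      simp only [derivative_mul, hP1, derivative_X, one_mul, derivative_sum,
        Polynomial.derivative_C, zero_mul, zero_add, map_zero, add_zero,
        derivative_C_mul, map_add, map_mul, map_sum, Polynomial.aeval_C,
        Polynomial.aeval_X, Complex.coe_algebraMap] at hder
      have hsig := hσ 1 (m+1)
      have hsub : ∑ k ∈ Finset.Icc (Nat.dist 1 (m+1)) (1 + (m+1)),
          (lc 1 (m+1) k : ℂ) *
            (σ k - σ 1 * Polynomial.aeval lam (derivative (P k))) = 0 := by
        have hrw : ∑ k ∈ Finset.Icc (Nat.dist 1 (m+1)) (1 + (m+1)),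
            (lc 1 (m+1) k : ℂ) * (σ 1 * Polynomial.aeval lam (derivative (P k)))
            = σ 1 * (Polynomial.aeval lam (P (m+1)) +
                lam * Polynomial.aeval lam (derivative (P (m+1)))) := by
          rw [hder, Finset.mul_sum]
          exact Finset.sum_congr rfl (fun k _ => by ring)
        simp only [mul_sub, Finset.sum_sub_distrib]
        rw [hrw, hsig, ← hphi (m+1), ih (m+1) (by omega)]
        ring
      rw [Finset.sum_eq_single (m+2)] at hsub
      · have hne : (lc 1 (m+1) (m+2) : ℂ) ≠ 0 := by
          exact_mod_cast (hlcpos (m+1)).ne'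
        have := (mul_eq_zero.mp hsub).resolve_left hne
        linear_combination this
      · intro k hk hne
        have hk' : k ≤ 1 + (m+1) := (Finset.mem_Icc.mp hk).2
        rw [ih k (by omega), sub_self, mul_zero]
      · intro hmem
        exact absurd (Finset.mem_Icc.mpr ⟨by simp [Nat.dist] <;> omega, by omega⟩) hmem
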